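/- Let G be a connected finite simple graph on at least two vertices with maximum degree Δ and minimum degree δ, let H be the complete graph K_k on k ≥ 3 vertices, and let H' be obtained from K_k by removing exactly one edge. Then (δ² / (4Δ²)) · λ(G, K_k) ≤ λ(G, H') ≤ (4Δ² / δ²) · λ(G, K_k). -/
import Mathlib


open scoped Classical
open Finset

/-- Degree of a vertex in a finite simple graph. -/
noncomputable def gdeg {V : Type*} [Fintype V] (G : SimpleGraph V) (v : V) : ℕ :=
  (G.neighborSet v).ncard

/-- The volume of a finite simple graph: the sum of the degrees of all vertices. -/
noncomputable def gvol {V : Type*} [Fintype V] (G : SimpleGraph V) : ℕ :=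
  ∑ v, gdeg G v

/-- The Rayleigh-type quotient `R_f(G, X)` for an embedding `f : V(G) → X` where `X`
carries a distance function `d`.  The sum over ordered pairs of adjacent vertices divided
by `2` is the sum over edges of `G`; the sum over ordered pairs of distinct vertices divided
by `2` is the sum over unordered pairs of distinct vertices of `G`. -/
noncomputable def Rf {V X : Type*} [Fintype V] (G : SimpleGraph V) (d : X → X → ℝ)
    (f : V → X) : ℝ :=
  ((gvol G : ℝ) * ((∑ u, ∑ v, if G.Adj u v then d (f u) (f v) ^ 2 else 0) / 2)) /
    ((∑ u, ∑ v, if u ≠ v then d (f u) (f v) ^ 2 * (gdeg G u : ℝ) * (gdeg G v : ℝ) else 0) / 2)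

/-- `lam G d` is `λ(G, X)`: the infimum of `R_f(G, X)` over nonconstant `f : V(G) → X`. -/
noncomputable def lam {V X : Type*} [Fintype V] (G : SimpleGraph V) (d : X → X → ℝ) : ℝ :=
  sInf {r | ∃ f : V → X, (∃ u v, f u ≠ f v) ∧ r = Rf G d f}

/-- The diameter of a finite simple graph: the maximum shortest-path distance over pairs. -/
noncomputable def gDiam {V : Type*} [Fintype V] (H : SimpleGraph V) : ℕ :=
  Finset.univ.sup fun p : V × V => H.dist p.1 p.2

/-- The maximum degree of a finite simple graph. -/
noncomputable def gMaxDeg {V : Type*} [Fintype V] (G : SimpleGraph V) : ℕ :=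
  Finset.univ.sup (gdeg G)

/-- The minimum degree of a finite simple graph. -/
noncomputable def gMinDeg {V : Type*} [Fintype V] (G : SimpleGraph V) : ℕ :=
  sInf (Set.range (gdeg G))

lemma Rf_nonneg {V X : Type*} [Fintype V] (G : SimpleGraph V) (d : X → X → ℝ)
    (f : V → X) : 0 ≤ Rf G d f := by
  unfold Rf
  apply div_nonneg
  · apply mul_nonneg (Nat.cast_nonneg _)
    apply div_nonneg _ (by norm_num)
    apply Finset.sum_nonneg; intro u _
    apply Finset.sum_nonneg; intro v _
    split <;> positivity
  · apply div_nonneg _ (by norm_num)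
    apply Finset.sum_nonneg; intro u _
    apply Finset.sum_nonneg; intro v _
    split <;> positivity

lemma Rf_compare {V X : Type*} [Fintype V] (G : SimpleGraph V)
    (d d' : X → X → ℝ)
    (hdeg : ∀ v, 0 < gdeg G v)
    (h0 : ∀ x y, 0 ≤ d x y)
    (h1 : ∀ x y, d x y ≤ d' x y)
    (h2 : ∀ x y, d' x y ≤ 2 * d x y)
    (hpos : ∀ x y, x ≠ y → 0 < d x y)
    (f : V → X) (hf : ∃ u v, f u ≠ f v) :
    (1/4) * Rf G d f ≤ Rf G d' f ∧ Rf G d' f ≤ 4 * Rf G d f := by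
  obtain ⟨u₀, v₀, huv⟩ := hf
  set NT : ℝ := ∑ u, ∑ v, if G.Adj u v then d (f u) (f v) ^ 2 else 0 with hNTdef
  set NH : ℝ := ∑ u, ∑ v, if G.Adj u v then d' (f u) (f v) ^ 2 else 0 with hNHdef
  set DT : ℝ := ∑ u, ∑ v, if u ≠ v then d (f u) (f v) ^ 2 * (gdeg G u : ℝ) * (gdeg G v : ℝ) else 0 with hDTdef
  set DH : ℝ := ∑ u, ∑ v, if u ≠ v then d' (f u) (f v) ^ 2 * (gdeg G u : ℝ) * (gdeg G v : ℝ) else 0 with hDHdef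
  have hsq1 : ∀ x y, d x y ^ 2 ≤ d' x y ^ 2 := fun x y =>
    pow_le_pow_left₀ (h0 x y) (h1 x y) 2
  have hsq2 : ∀ x y, d' x y ^ 2 ≤ 4 * d x y ^ 2 := by
    intro x y
    nlinarith [pow_le_pow_left₀ ((h0 x y).trans (h1 x y)) (h2 x y) 2, sq_nonneg (d x y)]
  have hNle : NT ≤ NH := by
    apply Finset.sum_le_sum; intro u _
    apply Finset.sum_le_sum; intro v _
    split
    · exact hsq1 _ _
    · exact le_refl _
  have hN4 : NH ≤ 4 * NT := by
    have : NH ≤ ∑ u, ∑ v, 4 * (if G.Adj u v then d (f u) (f v) ^ 2 else 0) := by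
      apply Finset.sum_le_sum; intro u _
      apply Finset.sum_le_sum; intro v _
      split
      · exact hsq2 _ _
      · norm_num
    calc NH ≤ _ := this
      _ = 4 * NT := by rw [hNTdef, Finset.mul_sum]; congr 1; ext u; rw [Finset.mul_sum]
  have hDle : DT ≤ DH := by
    apply Finset.sum_le_sum; intro u _
    apply Finset.sum_le_sum; intro v _
    split
    · exact mul_le_mul_of_nonneg_right
        (mul_le_mul_of_nonneg_right (hsq1 _ _) (Nat.cast_nonneg _)) (Nat.cast_nonneg _)
    · exact le_refl _
  have hD4 : DH ≤ 4 * DT := by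
    have : DH ≤ ∑ u, ∑ v, 4 * (if u ≠ v then d (f u) (f v) ^ 2 * (gdeg G u : ℝ) * (gdeg G v : ℝ) else 0) := by
      apply Finset.sum_le_sum; intro u _
      apply Finset.sum_le_sum; intro v _
      split
      · have h4 := hsq2 (f u) (f v)
        have hu : (0:ℝ) ≤ (gdeg G u : ℝ) := Nat.cast_nonneg _
        have hv : (0:ℝ) ≤ (gdeg G v : ℝ) := Nat.cast_nonneg _
        nlinarith [mul_nonneg hu hv]
      · norm_num
    calc DH ≤ _ := this
      _ = 4 * DT := by rw [hDTdef, Finset.mul_sum]; congr 1; ext u; rw [Finset.mul_sum]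
  have hDTpos : 0 < DT := by
    rw [hDTdef]
    apply Finset.sum_pos'
    · intro u _
      apply Finset.sum_nonneg; intro v _
      split <;> positivity
    · refine ⟨u₀, Finset.mem_univ _, ?_⟩
      apply Finset.sum_pos'
      · intro v _; split <;> positivity
      · refine ⟨v₀, Finset.mem_univ _, ?_⟩
        have hne : u₀ ≠ v₀ := fun h => huv (by rw [h])
        have hd : 0 < d (f u₀) (f v₀) := hpos _ _ huv
        have h1 : (0:ℝ) < (gdeg G u₀ : ℝ) := by exact_mod_cast hdeg u₀
        have h2 : (0:ℝ) < (gdeg G v₀ : ℝ) := by exact_mod_cast hdeg v₀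
        simp only [hne, if_true, ne_eq, not_false_eq_true]
        positivity
  have hDHpos : 0 < DH := lt_of_lt_of_le hDTpos hDle
  have hNTnn : 0 ≤ NT := by
    rw [hNTdef]; apply Finset.sum_nonneg; intro u _
    apply Finset.sum_nonneg; intro v _; split <;> positivity
  have hNHnn : 0 ≤ NH := hNTnn.trans hNle
  have hvol : (0:ℝ) ≤ (gvol G : ℝ) := Nat.cast_nonneg _
  have hRT : Rf G d f = (gvol G : ℝ) * NT / DT := by
    unfold Rf
    rw [← hNTdef, ← hDTdef]
    field_simp
  have hRH : Rf G d' f = (gvol G : ℝ) * NH / DH := by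
    unfold Rf
    rw [← hNHdef, ← hDHdef]
    field_simp
  rw [hRT, hRH]
  constructor
  · have heq : (1/4 : ℝ) * ((gvol G : ℝ) * NT / DT) = ((gvol G : ℝ) * NT) / (4 * DT) := by
      ring
    rw [heq, div_le_div_iff₀ (by linarith) hDHpos]
    have ha : (gvol G : ℝ) * NT * DH ≤ (gvol G : ℝ) * NH * DH :=
      mul_le_mul_of_nonneg_right (mul_le_mul_of_nonneg_left hNle hvol) hDHpos.le
    have hb : (gvol G : ℝ) * NH * DH ≤ (gvol G : ℝ) * NH * (4 * DT) :=
      mul_le_mul_of_nonneg_left hD4 (mul_nonneg hvol hNHnn)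
    linarith
  · have heq : (4 : ℝ) * ((gvol G : ℝ) * NT / DT) = (4 * ((gvol G : ℝ) * NT)) / DT := by
      ring
    rw [heq, div_le_div_iff₀ hDHpos hDTpos]
    have ha : (gvol G : ℝ) * NH * DT ≤ (gvol G : ℝ) * (4 * NT) * DT :=
      mul_le_mul_of_nonneg_right (mul_le_mul_of_nonneg_left hN4 hvol) hDTpos.le
    have hb : (4 : ℝ) * ((gvol G : ℝ) * NT) * DT ≤ 4 * ((gvol G : ℝ) * NT) * DH :=
      mul_le_mul_of_nonneg_left hDle (by positivity)
    nlinarith [ha, hb]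

lemma lam_nonneg {V X : Type*} [Fintype V] (G : SimpleGraph V) (d : X → X → ℝ)
    (f0 : V → X) (hf0 : ∃ u v, f0 u ≠ f0 v) : 0 ≤ lam G d := by
  refine le_csInf ⟨Rf G d f0, ⟨f0, hf0, rfl⟩⟩ ?_
  rintro r ⟨f, -, rfl⟩
  exact Rf_nonneg G d f

lemma lam_compare {V X : Type*} [Fintype V] (G : SimpleGraph V)
    (d d' : X → X → ℝ)
    (hdeg : ∀ v, 0 < gdeg G v)
    (h0 : ∀ x y, 0 ≤ d x y)
    (h1 : ∀ x y, d x y ≤ d' x y)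
    (h2 : ∀ x y, d' x y ≤ 2 * d x y)
    (hpos : ∀ x y, x ≠ y → 0 < d x y)
    (f0 : V → X) (hf0 : ∃ u v, f0 u ≠ f0 v) :
    (1/4) * lam G d ≤ lam G d' ∧ lam G d' ≤ 4 * lam G d := by
  have hbdd : BddBelow {r | ∃ f : V → X, (∃ u v, f u ≠ f v) ∧ r = Rf G d f} := by
    refine ⟨0, ?_⟩
    rintro r ⟨f, -, rfl⟩
    exact Rf_nonneg G d f
  have hbdd' : BddBelow {r | ∃ f : V → X, (∃ u v, f u ≠ f v) ∧ r = Rf G d' f} := by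
    refine ⟨0, ?_⟩
    rintro r ⟨f, -, rfl⟩
    exact Rf_nonneg G d' f
  constructor
  · refine le_csInf ⟨Rf G d' f0, ⟨f0, hf0, rfl⟩⟩ ?_
    rintro r ⟨f, hf, rfl⟩
    have h := (Rf_compare G d d' hdeg h0 h1 h2 hpos f hf).1
    have hle : lam G d ≤ Rf G d f := csInf_le hbdd ⟨f, hf, rfl⟩
    linarith
  · have h4 : lam G d' / 4 ≤ lam G d := by
      refine le_csInf ⟨Rf G d f0, ⟨f0, hf0, rfl⟩⟩ ?_
      rintro r ⟨f, hf, rfl⟩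
      have h := (Rf_compare G d d' hdeg h0 h1 h2 hpos f hf).2
      have hle : lam G d' ≤ Rf G d' f := csInf_le hbdd' ⟨f, hf, rfl⟩
      linarith
    linarith

lemma gdeg_pos {V : Type*} [Fintype V] (G : SimpleGraph V)
    (hG : G.Connected) (hV : 2 ≤ Fintype.card V) (v : V) : 0 < gdeg G v := by
  have hV1 : 1 < Fintype.card V := by omega
  obtain ⟨w, hw⟩ := Fintype.exists_ne_of_one_lt_card hV1 v
  have hr : G.Reachable v w := hG.preconnected v w
  have hd : G.dist v w ≠ 0 := by
    have := hr.pos_dist_of_ne (Ne.symm hw)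
    omega
  obtain ⟨p, hp⟩ := SimpleGraph.exists_walk_of_dist_ne_zero hd
  have hnil : ¬ p.Nil := SimpleGraph.Walk.not_nil_of_ne (Ne.symm hw)
  have hadj : G.Adj v (p.getVert 1) := p.adj_snd hnil
  have : (G.neighborSet v).Nonempty := ⟨p.getVert 1, hadj⟩
  exact (Set.ncard_pos (Set.toFinite _)).mpr this

/-- For a connected finite simple graph `G` on at least two vertices with
maximum degree `Δ` and minimum degree `δ`, `H = K_k` (`k ≥ 3`) and `H'` obtained from `K_k`
by removing exactly one edge,
`(δ²/(4Δ²)) λ(G, K_k) ≤ λ(G, H') ≤ (4Δ²/δ²) λ(G, K_k)`. -/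
theorem stmt_11 {V : Type*} [Fintype V] (G : SimpleGraph V)
    (hG : G.Connected) (hV : 2 ≤ Fintype.card V)
    (k : ℕ) (hk : 3 ≤ k) (i j : Fin k) (hij : i ≠ j)
    (H' : SimpleGraph (Fin k))
    (hH' : H' = (⊤ : SimpleGraph (Fin k)).deleteEdges {s(i, j)}) :
    (gMinDeg G : ℝ) ^ 2 / (4 * (gMaxDeg G : ℝ) ^ 2) *
        lam G (fun a b : Fin k => ((⊤ : SimpleGraph (Fin k)).dist a b : ℝ))
      ≤ lam G (fun a b => (H'.dist a b : ℝ)) ∧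
    lam G (fun a b => (H'.dist a b : ℝ)) ≤
      4 * (gMaxDeg G : ℝ) ^ 2 / (gMinDeg G : ℝ) ^ 2 *
        lam G (fun a b : Fin k => ((⊤ : SimpleGraph (Fin k)).dist a b : ℝ)) := by
  subst hH'
  haveI : Nonempty V := Fintype.card_pos_iff.mp (by omega)
  have hdeg : ∀ v, 0 < gdeg G v := gdeg_pos G hG hV
  -- degree bounds
  have hmin1 : 1 ≤ gMinDeg G := by
    have hmem : gMinDeg G ∈ Set.range (gdeg G) :=
      Nat.sInf_mem (Set.range_nonempty (gdeg G))
    obtain ⟨v, hv⟩ := hmem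
    rw [← hv]
    exact hdeg v
  have hminmax : gMinDeg G ≤ gMaxDeg G := by
    obtain ⟨v⟩ := ‹Nonempty V›
    exact le_trans (Nat.sInf_le ⟨v, rfl⟩) (Finset.le_sup (Finset.mem_univ v))
  set δ : ℝ := (gMinDeg G : ℝ) with hδdef
  set Δ : ℝ := (gMaxDeg G : ℝ) with hΔdef
  have hδ1 : (1:ℝ) ≤ δ := by rw [hδdef]; exact_mod_cast hmin1
  have hδΔ : δ ≤ Δ := by rw [hδdef, hΔdef]; exact_mod_cast hminmax
  have hΔ0 : (0:ℝ) < Δ := by linarith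
  have hδ0 : (0:ℝ) < δ := by linarith
  have hsq : δ ^ 2 ≤ Δ ^ 2 := by nlinarith
  have hc : δ ^ 2 / (4 * Δ ^ 2) ≤ 1/4 := by
    rw [div_le_div_iff₀ (by positivity) (by norm_num)]
    nlinarith
  have hc0 : (0:ℝ) ≤ δ ^ 2 / (4 * Δ ^ 2) := by positivity
  have hC : (4:ℝ) ≤ 4 * Δ ^ 2 / δ ^ 2 := by
    rw [le_div_iff₀ (by positivity)]
    nlinarith
  -- distances
  set G' : SimpleGraph (Fin k) := (⊤ : SimpleGraph (Fin k)).deleteEdges {s(i, j)} with hG'def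
  have htop : ∀ a b : Fin k, a ≠ b → (⊤ : SimpleGraph (Fin k)).dist a b = 1 := by
    intro a b h
    exact SimpleGraph.dist_eq_one_iff_adj.mpr (by simpa using h)
  have hcex : ∃ c : Fin k, c ≠ i ∧ c ≠ j := by
    by_contra h
    push_neg at h
    have hsub : (Finset.univ : Finset (Fin k)) ⊆ {i, j} := by
      intro c _
      by_cases hci : c = i
      · simp [hci]
      · simp [h c hci]
    have hcard := Finset.card_le_card hsub
    rw [Finset.card_univ, Fintype.card_fin] at hcard
    have h2 : ({i, j} : Finset (Fin k)).card ≤ 2 :=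
      (Finset.card_insert_le _ _).trans (by simp)
    omega
  have hGb : ∀ a b : Fin k, a ≠ b → 1 ≤ G'.dist a b ∧ G'.dist a b ≤ 2 := by
    intro a b hab
    by_cases hadj : G'.Adj a b
    · rw [SimpleGraph.dist_eq_one_iff_adj.mpr hadj]
      omega
    · have hmem : s(a, b) ∈ ({s(i, j)} : Set (Sym2 (Fin k))) := by
        by_contra hmem
        exact hadj (SimpleGraph.deleteEdges_adj.mpr ⟨by simpa using hab, hmem⟩)
      have hsym : s(a, b) = s(i, j) := by simpa using hmem
      rw [Sym2.eq_iff] at hsym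
      obtain ⟨c, hci, hcj⟩ := hcex
      have hca : c ≠ a := by rcases hsym with ⟨rfl, rfl⟩ | ⟨rfl, rfl⟩ <;> assumption
      have hcb : c ≠ b := by rcases hsym with ⟨rfl, rfl⟩ | ⟨rfl, rfl⟩ <;> assumption
      have hac : G'.Adj a c := by
        apply SimpleGraph.deleteEdges_adj.mpr
        refine ⟨by simpa using (Ne.symm hca), ?_⟩
        simp only [Set.mem_singleton_iff, Sym2.eq_iff]
        rintro (⟨h1, h2⟩ | ⟨h1, h2⟩) <;> rcases hsym with ⟨h3, h4⟩ | ⟨h3, h4⟩ <;> simp_all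
      have hcb' : G'.Adj c b := by
        apply SimpleGraph.deleteEdges_adj.mpr
        refine ⟨by simpa using hcb, ?_⟩
        simp only [Set.mem_singleton_iff, Sym2.eq_iff]
        rintro (⟨h1, h2⟩ | ⟨h1, h2⟩) <;> rcases hsym with ⟨h3, h4⟩ | ⟨h3, h4⟩ <;> simp_all
      have hle : G'.dist a b ≤ 2 := by
        have := SimpleGraph.dist_le (SimpleGraph.Walk.cons hac (SimpleGraph.Walk.cons hcb' SimpleGraph.Walk.nil))
        simpa using this
      have hpos : 0 < G'.dist a b :=
        SimpleGraph.Reachable.pos_dist_of_ne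
          ⟨SimpleGraph.Walk.cons hac (SimpleGraph.Walk.cons hcb' SimpleGraph.Walk.nil)⟩ hab
      omega
  -- hypotheses for lam_compare
  have h0 : ∀ x y : Fin k, (0:ℝ) ≤ ((⊤ : SimpleGraph (Fin k)).dist x y : ℝ) :=
    fun x y => Nat.cast_nonneg _
  have h1 : ∀ x y : Fin k,
      ((⊤ : SimpleGraph (Fin k)).dist x y : ℝ) ≤ (G'.dist x y : ℝ) := by
    intro x y
    rcases eq_or_ne x y with rfl | hxy
    · simp [SimpleGraph.dist_self]
    · rw [htop x y hxy]
      exact_mod_cast (hGb x y hxy).1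
  have h2 : ∀ x y : Fin k,
      (G'.dist x y : ℝ) ≤ 2 * ((⊤ : SimpleGraph (Fin k)).dist x y : ℝ) := by
    intro x y
    rcases eq_or_ne x y with rfl | hxy
    · simp [SimpleGraph.dist_self]
    · rw [htop x y hxy]
      have := (hGb x y hxy).2
      push_cast
      exact_mod_cast (by exact_mod_cast this : (G'.dist x y : ℝ) ≤ 2)
  have hpos : ∀ x y : Fin k, x ≠ y → (0:ℝ) < ((⊤ : SimpleGraph (Fin k)).dist x y : ℝ) := by
    intro x y hxy
    rw [htop x y hxy]
    norm_num
  -- a nonconstant function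
  obtain ⟨u0, v0, huv0⟩ := Fintype.exists_pair_of_one_lt_card (by omega : 1 < Fintype.card V)
  set f0 : V → Fin k := fun v => if v = u0 then i else j with hf0def
  have hf0 : ∃ u v, f0 u ≠ f0 v := by
    refine ⟨u0, v0, ?_⟩
    simp only [hf0def, if_pos rfl, if_neg (Ne.symm huv0)]
    exact hij
  have hmain := lam_compare G
    (fun a b : Fin k => ((⊤ : SimpleGraph (Fin k)).dist a b : ℝ))
    (fun a b : Fin k => (G'.dist a b : ℝ))
    hdeg h0 h1 h2 hpos f0 hf0
  have hlamnn : 0 ≤ lam G (fun a b : Fin k => ((⊤ : SimpleGraph (Fin k)).dist a b : ℝ)) :=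
    lam_nonneg G _ f0 hf0
  set lT := lam G (fun a b : Fin k => ((⊤ : SimpleGraph (Fin k)).dist a b : ℝ))
  set lH := lam G (fun a b : Fin k => (G'.dist a b : ℝ))
  obtain ⟨hlow, hhigh⟩ := hmain
  constructor
  · have : δ ^ 2 / (4 * Δ ^ 2) * lT ≤ (1/4) * lT :=
      mul_le_mul_of_nonneg_right hc hlamnn
    linarith
  · have : 4 * lT ≤ (4 * Δ ^ 2 / δ ^ 2) * lT :=
      mul_le_mul_of_nonneg_right hC hlamnn
    linarith
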